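/- For any n-dimensional probability vector y, T(y) ⊆ R(y). That is, if there exists a probability vector c with x ⊗ c ≺ y ⊗ c, then the Renyi entropy of x is not less than that of y: either d_x > d_y and S^{(α)}(x) ≥ S^{(α)}(y) for all α ≥ 0, or d_x = d_y and S^{(α)}(x) ≥ S^{(α)}(y) for all real α. -/

import Mathlib

open Finset

variable {ι κ : Type*}

/-- `eSum x l` is the sum of the `l` largest components of `x`. -/
noncomputable def eSum [Fintype ι] (x : ι → ℝ) (l : ℕ) : ℝ :=
  sSup {r : ℝ | ∃ s : Finset ι, s.card = l ∧ r = ∑ i ∈ s, x i}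

/-- Majorization `x ≺ y` for vectors over the same (finite) index type:
`e_l(x) ≤ e_l(y)` for all `1 ≤ l ≤ n - 1`, with equal total sums. -/
def Maj [Fintype ι] (x y : ι → ℝ) : Prop :=
  (∀ l : ℕ, 1 ≤ l → l < Fintype.card ι → eSum x l ≤ eSum y l) ∧
    ∑ i, x i = ∑ i, y i

/-- A probability vector: nonnegative components summing to 1. -/
def IsProbVec [Fintype ι] (x : ι → ℝ) : Prop :=
  (∀ i, 0 ≤ x i) ∧ ∑ i, x i = 1

/-- Kronecker product of two vectors. -/
def kron (x : ι → ℝ) (c : κ → ℝ) : ι × κ → ℝ := fun p => x p.1 * c p.2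

/-- `k`-fold Kronecker power of a vector. -/
def kpow (x : ι → ℝ) (k : ℕ) : (Fin k → ι) → ℝ := fun f => ∏ j, x (f j)

/-- Direct sum (concatenation) of two vectors. -/
def dsum (x : ι → ℝ) (c : κ → ℝ) : ι ⊕ κ → ℝ := Sum.elim x c

/-- `k`-fold direct sum (concatenation) of `x` with itself. -/
def dpow (x : ι → ℝ) (k : ℕ) : Fin k × ι → ℝ := fun p => x p.2

/-- `x ∈ S°(y)`: all partial-sum inequalities `e_l(x) < e_l(y)` are strict for
`1 ≤ l ≤ n - 1`, and the total sums coincide. -/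
def InteriorS [Fintype ι] (x y : ι → ℝ) : Prop :=
  (∀ l : ℕ, 1 ≤ l → l < Fintype.card ι → eSum x l < eSum y l) ∧
    ∑ i, x i = ∑ i, y i

/-- `d_x`: the number of nonzero components of `x`. -/
noncomputable def dsupp (x : ι → ℝ) : ℕ := Nat.card (Function.support x)

/-- The `α`-Renyi entropy `S^{(α)}(x)`; at `α = 1` it is the Shannon entropy. -/
noncomputable def renyi [Fintype ι] (x : ι → ℝ) (α : ℝ) : ℝ :=
  if α = 1 then -∑ i, x i * Real.logb 2 (x i)
  else (if 0 ≤ α then (1 : ℝ) else -1) / (1 - α) *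
    Real.logb 2 (∑ i, if x i = 0 then 0 else x i ^ α)

/-- The Renyi entropy of `x` is not less than that of `y`. -/
def RenyiGE [Fintype ι] [Fintype κ] (x : ι → ℝ) (y : κ → ℝ) : Prop :=
  (dsupp x > dsupp y ∧ ∀ α : ℝ, 0 ≤ α → renyi y α ≤ renyi x α) ∨
  (dsupp x = dsupp y ∧ ∀ α : ℝ, renyi y α ≤ renyi x α)

-- ===== auxiliary machinery =====
section Aux
open Finset

-- sorted (descending) list of values of a vector
noncomputable def sList {ι : Type*} [Fintype ι] (x : ι → ℝ) : List ℝ :=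
  Multiset.sort (Finset.univ.val.map x) (· ≥ ·)

variable {ι' : Type*} [Fintype ι']

lemma sList_coe (x : ι' → ℝ) : (sList x : Multiset ℝ) = Finset.univ.val.map x :=
  Multiset.sort_eq _ _

lemma sList_sorted (x : ι' → ℝ) : (sList x).Pairwise (· ≥ ·) := Multiset.pairwise_sort _ _

lemma sList_length (x : ι' → ℝ) : (sList x).length = Fintype.card ι' := by
  have := congrArg Multiset.card (sList_coe x); simpa using this

lemma sList_sum (x : ι' → ℝ) : (sList x).sum = ∑ i, x i := by
  have := congrArg Multiset.sum (sList_coe x)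
  rw [Multiset.sum_coe] at this
  rw [this, Finset.sum]

lemma sList_mem {x : ι' → ℝ} {a : ℝ} (ha : a ∈ sList x) : ∃ i, x i = a := by
  have : a ∈ (sList x : Multiset ℝ) := by exact_mod_cast ha
  rw [sList_coe] at this; simpa using this

lemma sList_map_sum (x : ι' → ℝ) (f : ℝ → ℝ) : ((sList x).map f).sum = ∑ i, f (x i) := by
  have h1 : (((sList x).map f : List ℝ) : Multiset ℝ) = (Finset.univ.val.map x).map f := by
    rw [← sList_coe]; rfl
  have h2 := congrArg Multiset.sum h1
  rw [Multiset.sum_coe, Multiset.map_map] at h2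
  rw [h2, Finset.sum]; rfl

lemma sum_range_map (L : List ℝ) (f : ℝ → ℝ) :
    (L.map f).sum = ∑ i ∈ Finset.range L.length, f (L.getD i 0) := by
  induction L with
  | nil => simp
  | cons a L ih =>
    rw [List.map_cons, List.sum_cons, List.length_cons, Finset.sum_range_succ', ih]
    simp [List.getD_cons_succ]
    ring

lemma take_sum_eq (L : List ℝ) (l : ℕ) :
    (L.take l).sum = ∑ i ∈ Finset.range l, L.getD i 0 := by
  induction l with
  | zero => simp
  | succ k ih =>
    rcases le_or_gt L.length k with hk | hk
    · rw [List.take_of_length_le (le_trans hk (Nat.le_succ k)), List.take_of_length_le hk] at *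
      rw [Finset.sum_range_succ, ← ih, List.getD_eq_default _ _ hk]
      ring
    · rw [List.sum_take_succ _ _ hk, Finset.sum_range_succ, ih,
        List.getD_eq_getElem _ _ hk]

end Aux
-- ===== eSum facts =====
section ESum
open Finset
variable {ι' : Type*} [Fintype ι']

lemma eSum_set_eq (x : ι' → ℝ) (l : ℕ) :
    {r : ℝ | ∃ s : Finset ι', s.card = l ∧ r = ∑ i ∈ s, x i} =
      ↑((Finset.univ.powersetCard l).image (fun s => ∑ i ∈ s, x i)) := by
  ext r
  simp only [Set.mem_setOf_eq, Finset.coe_image, Set.mem_image, Finset.mem_coe,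
    Finset.mem_powersetCard_univ]
  constructor
  · rintro ⟨s, hs, rfl⟩; exact ⟨s, hs, rfl⟩
  · rintro ⟨s, hs, rfl⟩; exact ⟨s, hs, rfl⟩

lemma le_eSum (x : ι' → ℝ) {l : ℕ} {s : Finset ι'} (hs : s.card = l) :
    ∑ i ∈ s, x i ≤ eSum x l := by
  apply le_csSup
  · rw [eSum_set_eq]
    exact ((Finset.univ.powersetCard l).image (fun s => ∑ i ∈ s, x i)).finite_toSet.bddAbove
  · exact ⟨s, hs, rfl⟩

lemma eSum_exists (x : ι' → ℝ) {l : ℕ} (hl : l ≤ Fintype.card ι') :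
    ∃ s : Finset ι', s.card = l ∧ eSum x l = ∑ i ∈ s, x i := by
  obtain ⟨s₀, -, hs₀⟩ :=
    Finset.exists_subset_card_eq (by simpa using hl : l ≤ Finset.univ.card (α := ι'))
  have hne : {r : ℝ | ∃ s : Finset ι', s.card = l ∧ r = ∑ i ∈ s, x i}.Nonempty :=
    ⟨∑ i ∈ s₀, x i, s₀, hs₀, rfl⟩
  have hfin : {r : ℝ | ∃ s : Finset ι', s.card = l ∧ r = ∑ i ∈ s, x i}.Finite := by
    rw [eSum_set_eq]; exact Finset.finite_toSet _
  obtain ⟨s, hs, h⟩ := hne.csSup_mem hfin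
  exact ⟨s, hs, h⟩

lemma sublist_sum_le_take {l₁ l₂ : List ℝ} (h : l₁.Sublist l₂) (hs : l₂.Pairwise (· ≥ ·)) :
    l₁.sum ≤ (l₂.take l₁.length).sum := by
  induction h with
  | slnil => simp
  | @cons l₁' l₂' a h ih =>
    have hs' : l₂'.Pairwise (· ≥ ·) := hs.of_cons
    rcases hl : l₁' with _ | ⟨b, t⟩
    · simp
    · subst hl
      have hk : t.length < l₂'.length := by simpa using h.length_le
      have h1 : (b :: t).sum ≤ (l₂'.take (t.length + 1)).sum := by
        simpa using ih hs'
      have h2 : (l₂'.take (t.length + 1)).sum = (l₂'.take t.length).sum + l₂'[t.length] :=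
        List.sum_take_succ _ _ hk
      have h3 : l₂'[t.length] ≤ a := by
        have hmem : l₂'[t.length] ∈ l₂' := List.getElem_mem hk
        exact List.rel_of_pairwise_cons hs hmem
      calc (b :: t).sum ≤ (l₂'.take t.length).sum + l₂'[t.length] := by rw [← h2]; exact h1
        _ ≤ a + (l₂'.take t.length).sum := by linarith
        _ = ((a :: l₂').take ((b :: t).length)).sum := by simp
  | @cons_cons l₁' l₂' a h ih =>
    have hs' : l₂'.Pairwise (· ≥ ·) := hs.of_cons
    have := ih hs'
    simp only [List.length_cons, List.take_succ_cons, List.sum_cons]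
    linarith

lemma exists_preimage_of_le_map {α : Type*} (x : α → ℝ) (s : Multiset α) (t : Multiset ℝ)
    (h : t ≤ s.map x) : ∃ u, u ≤ s ∧ u.map x = t := by
  induction s using Quotient.inductionOn with
  | h L =>
  induction t using Quotient.inductionOn with
  | h T =>
  have h' : List.Subperm T (L.map x) := by
    rw [← Multiset.coe_le]
    simpa using h
  obtain ⟨l', hperm, hsub⟩ := h'
  obtain ⟨l₀, hl₀, rfl⟩ := List.sublist_map_iff.mp hsub
  refine ⟨(l₀ : Multiset α), ?_, ?_⟩
  · exact Multiset.coe_le.mpr hl₀.subperm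
  · show ((l₀.map x : List ℝ) : Multiset ℝ) = _
    exact Quot.sound hperm

lemma eSum_eq_take (x : ι' → ℝ) {l : ℕ} (hl : l ≤ Fintype.card ι') :
    eSum x l = ((sList x).take l).sum := by
  apply le_antisymm
  · obtain ⟨s, hs, he⟩ := eSum_exists x hl
    rw [he]
    set m : Multiset ℝ := s.val.map x with hm
    have hle : m ≤ (sList x : Multiset ℝ) := by
      rw [sList_coe]
      exact Multiset.map_le_map (Finset.val_le_iff.mpr (Finset.subset_univ s))
    have hle' : List.Subperm m.toList (sList x) := by
      rw [← Multiset.coe_le, Multiset.coe_toList]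
      exact hle
    obtain ⟨l'', hp, hsub⟩ := hle'
    have hsum : l''.sum = ∑ i ∈ s, x i := by
      rw [hp.sum_eq, Multiset.sum_toList]
      rfl
    have hlen : l''.length = l := by
      rw [hp.length_eq, Multiset.length_toList, hm]
      simpa using hs
    have := sublist_sum_le_take hsub (sList_sorted x)
    rw [hsum, hlen] at this
    exact this
  · have hsub : ((sList x).take l).Sublist (sList x) := List.take_sublist _ _
    have hle : (((sList x).take l : List ℝ) : Multiset ℝ) ≤ Finset.univ.val.map x := by
      rw [← sList_coe]
      exact Multiset.coe_le.mpr hsub.subperm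
    obtain ⟨u, hu, hmap⟩ := exists_preimage_of_le_map x _ _ hle
    have hnodup : u.Nodup := Multiset.nodup_of_le hu Finset.univ.nodup
    have hcard : (⟨u, hnodup⟩ : Finset ι').card = l := by
      have h1 : Multiset.card (Multiset.map x u) = ((sList x).take l).length := by
        rw [hmap]; simp
      rw [Multiset.card_map] at h1
      have h2 : ((sList x).take l).length = l := by
        rw [List.length_take, sList_length]; omega
      show Multiset.card u = l
      rw [h1, h2]
    have hsum : ∑ i ∈ (⟨u, hnodup⟩ : Finset ι'), x i = ((sList x).take l).sum := by
      show (u.map x).sum = _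
      rw [hmap, Multiset.sum_coe]
    rw [← hsum]
    exact le_eSum x hcard

end ESum
lemma slope_symm (f : ℝ → ℝ) (a b : ℝ) : (f b - f a) / (b - a) = (f a - f b) / (a - b) := by
  rw [← neg_sub (f b) (f a), ← neg_sub b a, neg_div_neg_eq]

lemma slope_core {S : Set ℝ} {f : ℝ → ℝ} (hg : ConvexOn ℝ S f)
    {p1 q1 p2 q2 : ℝ} (hp1 : p1 ∈ S) (hq1 : q1 ∈ S) (hp2 : p2 ∈ S) (hq2 : q2 ∈ S)
    (hpp : p1 ≤ p2) (hqq : q1 ≤ q2) (h1 : p1 < q1) (h2 : p2 < q2) :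
    (f q1 - f p1) / (q1 - p1) ≤ (f q2 - f p2) / (q2 - p2) := by
  have s1 := hg.secant_mono hp1 hq1 hq2 (ne_of_gt h1) (ne_of_gt (h1.trans_le hqq)) hqq
  have s2 := hg.secant_mono hq2 hp1 hp2 (ne_of_lt (h1.trans_le hqq)) (ne_of_lt h2) hpp
  calc (f q1 - f p1) / (q1 - p1) ≤ (f q2 - f p1) / (q2 - p1) := s1
    _ = (f p1 - f q2) / (p1 - q2) := (slope_symm f q2 p1).symm
    _ ≤ (f p2 - f q2) / (p2 - q2) := s2
    _ = (f q2 - f p2) / (q2 - p2) := slope_symm f q2 p2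

lemma slope_pair_convex {S : Set ℝ} {f : ℝ → ℝ} (hg : ConvexOn ℝ S f)
    {u1 v1 u2 v2 : ℝ} (hu1 : u1 ∈ S) (hv1 : v1 ∈ S) (hu2 : u2 ∈ S) (hv2 : v2 ∈ S)
    (h1 : u1 ≤ u2) (h2 : v1 ≤ v2) (hne1 : u1 ≠ v1) (hne2 : u2 ≠ v2) :
    (f v1 - f u1) / (v1 - u1) ≤ (f v2 - f u2) / (v2 - u2) := by
  rcases lt_or_gt_of_ne hne1 with hlt1 | hlt1 <;> rcases lt_or_gt_of_ne hne2 with hlt2 | hlt2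
  · exact slope_core hg hu1 hv1 hu2 hv2 h1 h2 hlt1 hlt2
  · rw [slope_symm f u2 v2]
    exact slope_core hg hu1 hv1 hv2 hu2 (hlt1.le.trans h2) (h2.trans hlt2.le) hlt1 hlt2
  · rw [slope_symm f u1 v1]
    exact slope_core hg hv1 hu1 hu2 hv2 (hlt1.le.trans h1) (h1.trans hlt2.le) hlt1 hlt2
  · rw [slope_symm f u1 v1, slope_symm f u2 v2]
    exact slope_core hg hv1 hu1 hv2 hu2 h2 h1 hlt1 hlt2

lemma slope_pair_concave {S : Set ℝ} {f : ℝ → ℝ} (hf : ConcaveOn ℝ S f)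
    {u1 v1 u2 v2 : ℝ} (hu1 : u1 ∈ S) (hv1 : v1 ∈ S) (hu2 : u2 ∈ S) (hv2 : v2 ∈ S)
    (h1 : u2 ≤ u1) (h2 : v2 ≤ v1) (hne1 : u1 ≠ v1) (hne2 : u2 ≠ v2) :
    (f v1 - f u1) / (v1 - u1) ≤ (f v2 - f u2) / (v2 - u2) := by
  have h' := slope_pair_convex hf.neg hu2 hv2 hu1 hv1 h1 h2 hne2 hne1
  simp only [Pi.neg_apply, neg_sub_neg] at h'
  have e : ∀ a b : ℝ, (f a - f b) / (b - a) = -((f b - f a) / (b - a)) := by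
    intro a b; rw [← neg_sub (f b) (f a), neg_div]
  rw [e, e] at h'
  exact le_of_neg_le_neg h'
open scoped Classical in
noncomputable def tieIdx (a b : ℕ → ℝ) (j₀ : ℕ) : ℕ → ℕ
  | 0 => if a 0 ≠ b 0 then 0 else j₀
  | (i+1) => if a (i+1) ≠ b (i+1) then i+1 else tieIdx a b j₀ i

lemma hlp_core (N : ℕ) (a b : ℕ → ℝ) (S : Set ℝ) (f : ℝ → ℝ)
    (hf : ConcaveOn ℝ S f)
    (haS : ∀ i, i < N → a i ∈ S) (hbS : ∀ i, i < N → b i ∈ S)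
    (hamono : ∀ i j, i ≤ j → j < N → a j ≤ a i)
    (hbmono : ∀ i j, i ≤ j → j < N → b j ≤ b i)
    (hpre : ∀ l, l ≤ N → ∑ i ∈ range l, a i ≤ ∑ i ∈ range l, b i)
    (htot : ∑ i ∈ range N, a i = ∑ i ∈ range N, b i) :
    ∑ i ∈ range N, f (b i) ≤ ∑ i ∈ range N, f (a i) := by
  classical
  by_cases hall : ∀ i, i < N → a i = b i
  · apply le_of_eq
    exact Finset.sum_congr rfl (fun i hi => by rw [hall i (mem_range.mp hi)])
  push_neg at hall
  obtain ⟨i₁, hi₁N, hi₁⟩ := hall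
  have hPex : ∃ i, i < N ∧ a i ≠ b i := ⟨i₁, hi₁N, hi₁⟩
  set j₀ := Nat.find hPex with hj₀def
  have hj₀ : j₀ < N ∧ a j₀ ≠ b j₀ := Nat.find_spec hPex
  set r := tieIdx a b j₀ with hrdef
  -- invariant
  have hinv : ∀ i, i < N → r i < N ∧ a (r i) ≠ b (r i) ∧ (r i ≤ i ∨ r i = j₀) := by
    intro i
    induction i with
    | zero =>
      intro _
      by_cases h0 : a 0 ≠ b 0
      · have : r 0 = 0 := by rw [hrdef]; simp [tieIdx, h0]
        rw [this]; exact ⟨by omega, h0, Or.inl le_rfl⟩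
      · have : r 0 = j₀ := by rw [hrdef]; simp [tieIdx, h0]
        rw [this]; exact ⟨hj₀.1, hj₀.2, Or.inr rfl⟩
    | succ k ih =>
      intro hkN
      by_cases hs : a (k+1) ≠ b (k+1)
      · have : r (k+1) = k+1 := by rw [hrdef]; simp [tieIdx, hs]
        rw [this]; exact ⟨hkN, hs, Or.inl le_rfl⟩
      · have hr : r (k+1) = r k := by rw [hrdef]; simp [tieIdx, hs]
        obtain ⟨h1, h2, h3⟩ := ih (by omega)
        rw [hr]
        exact ⟨h1, h2, by omega⟩
  -- slope sequence
  set c : ℕ → ℝ := fun i => (f (b (r i)) - f (a (r i))) / (b (r i) - a (r i)) with hcdef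
  have hmono : ∀ i, i + 1 < N → c i ≤ c (i + 1) := by
    intro i hiN
    by_cases hs : a (i+1) ≠ b (i+1)
    · have hri : r (i+1) = i+1 := by rw [hrdef]; simp [tieIdx, hs]
      obtain ⟨hrN, hrne, hrle⟩ := hinv i (by omega)
      have hle : r i ≤ i + 1 := by
        rcases hrle with h | h
        · omega
        · have : j₀ ≤ i + 1 := Nat.find_min' hPex ⟨hiN, hs⟩
          omega
      have ha' : a (i+1) ≤ a (r i) := hamono _ _ hle hiN
      have hb' : b (i+1) ≤ b (r i) := hbmono _ _ hle hiN
      have := slope_pair_concave hf (haS _ hrN) (hbS _ hrN) (haS _ hiN) (hbS _ hiN)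
        ha' hb' hrne hs
      rw [hcdef]; simp only []
      rw [hri]
      exact this
    · have hri : r (i+1) = r i := by rw [hrdef]; simp [tieIdx, hs]
      rw [hcdef]; simp only []
      rw [hri]
  -- per-term
  have hterm : ∀ i, i < N → c i * (a i - b i) ≤ f (a i) - f (b i) := by
    intro i hiN
    by_cases hs : a i ≠ b i
    · have hri : r i = i := by
        cases i with
        | zero => rw [hrdef]; simp [tieIdx, hs]
        | succ k => rw [hrdef]; simp [tieIdx, hs]
      apply le_of_eq
      rw [hcdef]; simp only []
      rw [hri]
      have hne : b i - a i ≠ 0 := sub_ne_zero.mpr (Ne.symm hs)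
      field_simp
      ring
    · push_neg at hs
      rw [hs]; simp
  -- Abel
  have habel : 0 ≤ ∑ i ∈ range N, c i * (a i - b i) := by
    have := Finset.sum_range_by_parts c (fun i => a i - b i) N
    simp only [smul_eq_mul] at this
    rw [this]
    have hz : ∑ i ∈ range N, (a i - b i) = 0 := by
      rw [Finset.sum_sub_distrib, htot]; ring
    rw [hz, mul_zero, zero_sub]
    rw [neg_nonneg]
    apply Finset.sum_nonpos
    intro i hi
    have hiN : i < N - 1 := mem_range.mp hi
    have h1 : 0 ≤ c (i+1) - c i := sub_nonneg.mpr (hmono i (by omega))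
    have h2 : ∑ j ∈ range (i+1), (a j - b j) ≤ 0 := by
      rw [Finset.sum_sub_distrib]
      have := hpre (i+1) (by omega)
      linarith
    exact mul_nonpos_of_nonneg_of_nonpos h1 h2
  have : ∑ i ∈ range N, (f (a i) - f (b i)) ≥ ∑ i ∈ range N, c i * (a i - b i) :=
    Finset.sum_le_sum (fun i hi => hterm i (mem_range.mp hi))
  have hfin : 0 ≤ ∑ i ∈ range N, (f (a i) - f (b i)) := le_trans habel this
  rw [Finset.sum_sub_distrib] at hfin
  linarith
section Struct
open Finset
variable {ι' : Type*} [Fintype ι']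
lemma dsupp_eq_filter (x : ι' → ℝ) :
    dsupp x = (Finset.univ.filter (fun i => x i ≠ 0)).card := by
  classical
  rw [dsupp, Nat.card_coe_set_eq, Set.ncard_eq_toFinset_card']
  congr 1
  ext i
  exact Set.mem_toFinset.trans (by simp [Function.support])

lemma dsupp_eq_countP (x : ι' → ℝ) :
    dsupp x = (sList x).countP (fun t => decide (t ≠ 0)) := by
  classical
  have h1 : Multiset.countP (fun t : ℝ => t ≠ 0) ↑(sList x)
      = Multiset.countP (fun t : ℝ => t ≠ 0) (Finset.univ.val.map x) := by rw [sList_coe]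
  rw [Multiset.coe_countP] at h1
  rw [Multiset.countP_map] at h1
  rw [dsupp_eq_filter]
  rw [h1]
  rfl

section structure_lemmas
variable {x : ι' → ℝ} (hx : ∀ i, 0 ≤ x i)

lemma sList_nonneg (hx : ∀ i, 0 ≤ x i) {a : ℝ} (ha : a ∈ sList x) : 0 ≤ a := by
  obtain ⟨i, rfl⟩ := sList_mem ha; exact hx i

lemma sList_getElem_anti {i j : ℕ} (hij : i ≤ j) (hj : j < (sList x).length) :
    (sList x)[j] ≤ (sList x)[i]'(lt_of_le_of_lt hij hj) := by
  rcases eq_or_lt_of_le hij with rfl | hlt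
  · exact le_rfl
  · exact List.pairwise_iff_get.mp (sList_sorted x) ⟨i, _⟩ ⟨j, hj⟩ hlt

lemma sList_getD_zero_of_ge (hx : ∀ i, 0 ≤ x i) {i : ℕ} (hi : dsupp x ≤ i) :
    (sList x).getD i 0 = 0 := by
  rcases le_or_gt (sList x).length i with hlen | hlen
  · exact List.getD_eq_default _ _ hlen
  · rw [List.getD_eq_getElem _ _ hlen]
    by_contra hne
    have hpos : 0 < (sList x)[i] :=
      lt_of_le_of_ne (sList_nonneg hx (List.getElem_mem hlen)) (Ne.symm hne)
    -- all first i+1 entries are nonzero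
    have hcount : i + 1 ≤ (sList x).countP (fun t => decide (t ≠ 0)) := by
      have : ((sList x).take (i+1)).countP (fun t => decide (t ≠ 0)) = (i+1) := by
        rw [List.countP_eq_length.mpr]
        · rw [List.length_take]; omega
        · intro a ha
          obtain ⟨j, hjlen, hj⟩ := List.mem_iff_getElem.mp ha
          have hjlt : j < i + 1 := by
            have := hjlen; rw [List.length_take] at this; omega
          have hje : ((sList x).take (i+1))[j] = (sList x)[j]'(by
            rw [List.length_take] at hjlen; omega) := List.getElem_take
          have : (sList x)[i] ≤ (sList x)[j]'(by rw [List.length_take] at hjlen; omega) :=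
            sList_getElem_anti (by omega) hlen
          simp only [← hj, hje]
          have : (0:ℝ) < (sList x)[j]'(by rw [List.length_take] at hjlen; omega) :=
            lt_of_lt_of_le hpos this
          simpa using ne_of_gt this
      calc i + 1 = ((sList x).take (i+1)).countP (fun t => decide (t ≠ 0)) := this.symm
        _ ≤ (sList x).countP (fun t => decide (t ≠ 0)) :=
            List.Sublist.countP_le (List.take_sublist _ _)
    rw [← dsupp_eq_countP] at hcount
    omega

lemma sList_getD_pos (hx : ∀ i, 0 ≤ x i) {i : ℕ} (hi : i < dsupp x) :
    0 < (sList x).getD i 0 := by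
  have hdlen : dsupp x ≤ (sList x).length := by
    rw [dsupp_eq_countP]; exact List.countP_le_length
  have hilen : i < (sList x).length := lt_of_lt_of_le hi hdlen
  rw [List.getD_eq_getElem _ _ hilen]
  rcases lt_or_ge 0 ((sList x)[i]) with h | h
  · exact h
  -- entry ≤ 0 hence = 0; then all of drop i are zero, contradiction with count
  · exfalso
    have hzero : (sList x)[i] = 0 :=
      le_antisymm h (sList_nonneg hx (List.getElem_mem hilen))
    have hdropz : ∀ a ∈ (sList x).drop i, a = 0 := by
      intro a ha
      obtain ⟨j, hjlen, hj⟩ := List.mem_iff_getElem.mp ha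
      have hlt : i + j < (sList x).length := by rw [List.length_drop] at hjlen; omega
      have hj' : a = (sList x)[i + j] := by
        rw [← hj]; exact List.getElem_drop
      have h1 : (sList x)[i + j] ≤ (sList x)[i] :=
        sList_getElem_anti (Nat.le_add_right _ _) hlt
      have h2 : 0 ≤ (sList x)[i + j] := sList_nonneg hx (List.getElem_mem hlt)
      rw [hj']; linarith
    have hcnt : (sList x).countP (fun t => decide (t ≠ 0)) ≤ i := by
      have hsplit : (sList x).countP (fun t => decide (t ≠ 0)) =
          ((sList x).take i).countP (fun t => decide (t ≠ 0)) +
          ((sList x).drop i).countP (fun t => decide (t ≠ 0)) := by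
        rw [← List.countP_append, List.take_append_drop]
      have hdz : ((sList x).drop i).countP (fun t => decide (t ≠ 0)) = 0 := by
        rw [List.countP_eq_zero]
        intro a ha
        simpa using hdropz a ha
      calc (sList x).countP (fun t => decide (t ≠ 0))
          = ((sList x).take i).countP (fun t => decide (t ≠ 0)) := by rw [hsplit, hdz]; ring
        _ ≤ ((sList x).take i).length := List.countP_le_length
        _ ≤ i := by rw [List.length_take]; omega
    rw [← dsupp_eq_countP] at hcnt
    omega
end structure_lemmas

end Struct
-- ===== Maj consequences & dsupp facts =====
section MajFacts
open Finset
variable {ι' : Type*} [Fintype ι']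

lemma prefix_of_maj {X Y : ι' → ℝ} (hm : Maj X Y) {l : ℕ} (hl : l ≤ Fintype.card ι') :
    ((sList X).take l).sum ≤ ((sList Y).take l).sum := by
  rcases Nat.eq_zero_or_pos l with rfl | hpos
  · simp
  rcases eq_or_lt_of_le hl with rfl | hlt
  · rw [List.take_of_length_le (le_of_eq (sList_length X)),
      List.take_of_length_le (le_of_eq (sList_length Y)), sList_sum, sList_sum]
    exact le_of_eq hm.2
  · rw [← eSum_eq_take X (le_of_lt hlt), ← eSum_eq_take Y (le_of_lt hlt)]
    exact hm.1 l hpos hlt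

lemma dsupp_le_card (x : ι' → ℝ) : dsupp x ≤ Fintype.card ι' := by
  rw [dsupp_eq_countP]
  exact (List.countP_le_length).trans (le_of_eq (sList_length x))

lemma dsupp_pos {x : ι' → ℝ} (hx : IsProbVec x) : 0 < dsupp x := by
  classical
  rw [dsupp_eq_filter, Finset.card_pos]
  have : ∃ i, x i ≠ 0 := by
    by_contra hno; push_neg at hno
    have h0 : ∑ i, x i = 0 := Finset.sum_eq_zero (fun i _ => hno i)
    rw [hx.2] at h0; norm_num at h0
  obtain ⟨i, hi⟩ := this
  exact ⟨i, Finset.mem_filter.mpr ⟨Finset.mem_univ i, hi⟩⟩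

lemma take_dsupp_sum {x : ι' → ℝ} (hx0 : ∀ i, 0 ≤ x i) :
    ((sList x).take (dsupp x)).sum = ∑ i, x i := by
  have hdrop : ((sList x).drop (dsupp x)).sum = 0 := by
    apply List.sum_eq_zero
    intro a ha
    obtain ⟨j, hjlen, hj⟩ := List.mem_iff_getElem.mp ha
    have hlt : dsupp x + j < (sList x).length := by rw [List.length_drop] at hjlen; omega
    have : a = (sList x)[dsupp x + j] := by rw [← hj]; exact List.getElem_drop
    rw [this, ← List.getD_eq_getElem _ 0 hlt]
    exact sList_getD_zero_of_ge hx0 (Nat.le_add_right _ _)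
  have := List.sum_take_add_sum_drop (sList x) (dsupp x)
  rw [hdrop, add_zero] at this
  rw [this, sList_sum]

lemma guard_sum_eq {x : ι' → ℝ} (hx0 : ∀ i, 0 ≤ x i) (g : ℝ → ℝ) :
    ∑ i, (if x i = 0 then 0 else g (x i)) =
      ∑ i ∈ Finset.range (dsupp x), g ((sList x).getD i 0) := by
  classical
  set G : ℝ → ℝ := fun t => if t = 0 then 0 else g t with hG
  have h1 : ∑ i, G (x i) = ((sList x).map G).sum := (sList_map_sum x G).symm
  have h2 : ((sList x).map G).sum = ∑ i ∈ Finset.range (sList x).length, G ((sList x).getD i 0) :=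
    sum_range_map _ _
  have hdlen : dsupp x ≤ (sList x).length := by
    rw [sList_length]; exact dsupp_le_card x
  have h3 : ∑ i ∈ Finset.range (sList x).length, G ((sList x).getD i 0) =
      ∑ i ∈ Finset.range (dsupp x), G ((sList x).getD i 0) := by
    symm
    apply Finset.sum_subset (Finset.range_subset_range.mpr hdlen)
    intro i _ hi
    rw [Finset.mem_range, not_lt] at hi
    rw [sList_getD_zero_of_ge hx0 hi]
    simp [hG]
  have h4 : ∑ i ∈ Finset.range (dsupp x), G ((sList x).getD i 0) =
      ∑ i ∈ Finset.range (dsupp x), g ((sList x).getD i 0) := by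
    apply Finset.sum_congr rfl
    intro i hi
    have := sList_getD_pos hx0 (Finset.mem_range.mp hi)
    rw [hG]
    simp only []
    rw [if_neg (by exact ne_of_gt this)]
  calc ∑ i, (if x i = 0 then 0 else g (x i)) = ∑ i, G (x i) := rfl
    _ = _ := by rw [h1, h2, h3, h4]

lemma dsupp_le_of_maj {X Y : ι' → ℝ} (hX : IsProbVec X) (hY : IsProbVec Y) (hm : Maj X Y) :
    dsupp Y ≤ dsupp X := by
  by_contra hlt
  push_neg at hlt
  set l := dsupp X with hl
  have hl1 : 1 ≤ l := dsupp_pos hX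
  have hlcard : l < Fintype.card ι' := lt_of_lt_of_le hlt (dsupp_le_card Y)
  have h1 : eSum X l = 1 := by
    rw [eSum_eq_take X (le_of_lt hlcard), take_dsupp_sum hX.1, hX.2]
  have h2 : eSum Y l < 1 := by
    rw [eSum_eq_take Y (le_of_lt hlcard)]
    have hlen : l < (sList Y).length := by
      rw [sList_length]; exact hlcard
    have hdrop : 0 < ((sList Y).drop l).sum := by
      rw [List.drop_eq_getElem_cons hlen, List.sum_cons]
      have hpos : 0 < (sList Y)[l] := by
        rw [← List.getD_eq_getElem _ 0 hlen]
        exact sList_getD_pos hY.1 hlt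
      have htail : 0 ≤ ((sList Y).drop (l+1)).sum := by
        apply List.sum_nonneg
        intro a ha
        exact sList_nonneg hY.1 (List.mem_of_mem_drop ha)
      linarith
    have := List.sum_take_add_sum_drop (sList Y) l
    rw [sList_sum, hY.2] at this
    linarith
  have := hm.1 l hl1 hlcard
  rw [h1] at this
  linarith

lemma dsupp_kron {κ' : Type*} [Fintype κ'] (x : ι' → ℝ) (c : κ' → ℝ) :
    dsupp (kron x c) = dsupp x * dsupp c := by
  classical
  rw [dsupp_eq_filter, dsupp_eq_filter, dsupp_eq_filter]
  rw [← Finset.card_product]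
  congr 1
  have : (Finset.univ : Finset (ι' × κ')) = Finset.univ ×ˢ Finset.univ := rfl
  rw [this, ← Finset.filter_product]
  apply Finset.filter_congr
  intro p _
  simp [kron, mul_ne_zero_iff]

end MajFacts
-- ===== vector-level HLP =====
section HLPVec
open Finset
variable {ι' : Type*} [Fintype ι']

lemma sList_getD_nonneg {x : ι' → ℝ} (hx0 : ∀ i, 0 ≤ x i) (i : ℕ) :
    0 ≤ (sList x).getD i 0 := by
  rcases lt_or_ge i (sList x).length with h | h
  · rw [List.getD_eq_getElem _ _ h]
    exact sList_nonneg hx0 (List.getElem_mem h)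
  · rw [List.getD_eq_default _ _ h]

lemma sList_getD_anti {x : ι' → ℝ} {i j : ℕ} (hij : i ≤ j) (hj : j < (sList x).length) :
    (sList x).getD j 0 ≤ (sList x).getD i 0 := by
  rw [List.getD_eq_getElem _ _ hj, List.getD_eq_getElem _ _ (lt_of_le_of_lt hij hj)]
  exact sList_getElem_anti hij hj

lemma sum_concave_le {X Y : ι' → ℝ} (hX : IsProbVec X) (hY : IsProbVec Y) (hm : Maj X Y)
    {f : ℝ → ℝ} (hf : ConcaveOn ℝ (Set.Ici 0) f) :
    ∑ i, f (Y i) ≤ ∑ i, f (X i) := by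
  set N := Fintype.card ι' with hN
  set a : ℕ → ℝ := fun i => (sList X).getD i 0 with ha
  set b : ℕ → ℝ := fun i => (sList Y).getD i 0 with hb
  have hXlen : (sList X).length = N := sList_length X
  have hYlen : (sList Y).length = N := sList_length Y
  have key := hlp_core N a b (Set.Ici 0) f hf
    (fun i _ => sList_getD_nonneg hX.1 i)
    (fun i _ => sList_getD_nonneg hY.1 i)
    (fun i j hij hj => sList_getD_anti hij (by omega))
    (fun i j hij hj => sList_getD_anti hij (by omega))
    (fun l hl => by
      rw [← take_sum_eq, ← take_sum_eq]
      exact prefix_of_maj hm hl)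
    (by
      rw [← take_sum_eq, ← take_sum_eq,
        List.take_of_length_le (le_of_eq hXlen), List.take_of_length_le (le_of_eq hYlen),
        sList_sum, sList_sum]
      exact hm.2)
  have cX : ∑ i ∈ Finset.range N, f (a i) = ∑ i, f (X i) := by
    rw [← hXlen, ← sum_range_map, sList_map_sum]
  have cY : ∑ i ∈ Finset.range N, f (b i) = ∑ i, f (Y i) := by
    rw [← hYlen, ← sum_range_map, sList_map_sum]
  rw [← cX, ← cY]
  exact key

lemma guard_sum_le {X Y : ι' → ℝ} (hX : IsProbVec X) (hY : IsProbVec Y) (hm : Maj X Y)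
    (hd : dsupp X = dsupp Y) {f : ℝ → ℝ} (hf : ConcaveOn ℝ (Set.Ioi 0) f) (g : ℝ → ℝ)
    (hgf : ∀ t : ℝ, 0 < t → g t = f t) :
    ∑ i, (if Y i = 0 then 0 else g (Y i)) ≤ ∑ i, (if X i = 0 then 0 else g (X i)) := by
  rw [guard_sum_eq hX.1 g, guard_sum_eq hY.1 g]
  set d := dsupp X with hdX
  set a : ℕ → ℝ := fun i => (sList X).getD i 0 with ha
  set b : ℕ → ℝ := fun i => (sList Y).getD i 0 with hb
  have hdcard : d ≤ Fintype.card ι' := dsupp_le_card X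
  have hXlen : (sList X).length = Fintype.card ι' := sList_length X
  have hYlen : (sList Y).length = Fintype.card ι' := sList_length Y
  have hmemX : ∀ i, i < d → a i ∈ Set.Ioi (0:ℝ) := fun i hi => sList_getD_pos hX.1 hi
  have hmemY : ∀ i, i < d → b i ∈ Set.Ioi (0:ℝ) := fun i hi =>
    sList_getD_pos hY.1 (by rw [← hd]; exact hi)
  have key := hlp_core d a b (Set.Ioi 0) f hf hmemX hmemY
    (fun i j hij hj => sList_getD_anti hij (by omega))
    (fun i j hij hj => sList_getD_anti hij (by omega))
    (fun l hl => by
      rw [← take_sum_eq, ← take_sum_eq]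
      exact prefix_of_maj hm (le_trans hl hdcard))
    (by
      rw [← take_sum_eq, ← take_sum_eq]
      have h1 : ((sList X).take d).sum = 1 := by
        rw [hdX, take_dsupp_sum hX.1, hX.2]
      have hXY : dsupp X = dsupp Y := by rw [← hdX, hd]
      have h2 : ((sList Y).take d).sum = 1 := by
        rw [hdX, hXY, take_dsupp_sum hY.1, hY.2]
      rw [h1, h2])
  have cX : ∑ i ∈ Finset.range d, g (a i) = ∑ i ∈ Finset.range d, f (a i) :=
    Finset.sum_congr rfl (fun i hi => hgf _ (hmemX i (Finset.mem_range.mp hi)))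
  have cY : ∑ i ∈ Finset.range (dsupp Y), g (b i) = ∑ i ∈ Finset.range d, f (b i) := by
    rw [← hd]
    exact Finset.sum_congr rfl (fun i hi => hgf _ (hmemY i (Finset.mem_range.mp hi)))
  rw [cX, cY]
  exact key

end HLPVec
-- ===== rpow convexity for negative exponents =====
lemma convexOn_rpow_neg {p : ℝ} (hp : p < 0) :
    ConvexOn ℝ (Set.Ioi (0:ℝ)) fun t : ℝ => t ^ p := by
  have himg : (fun x : ℝ => p * Real.log x) '' (Set.Ioi 0) = Set.univ := by
    apply Set.eq_univ_of_forall
    intro y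
    refine ⟨Real.exp (y / p), Real.exp_pos _, ?_⟩
    show p * Real.log (Real.exp (y / p)) = y
    rw [Real.log_exp, mul_comm, div_mul_cancel₀ _ (ne_of_lt hp)]
  have hinner : ConvexOn ℝ (Set.Ioi (0:ℝ)) fun x : ℝ => p * Real.log x := by
    have hlog : ConcaveOn ℝ (Set.Ioi (0:ℝ)) Real.log := strictConcaveOn_log_Ioi.concaveOn
    have h1 : ConcaveOn ℝ (Set.Ioi (0:ℝ)) ((-p) • Real.log) := hlog.smul (by linarith)
    have h2 : ConvexOn ℝ (Set.Ioi (0:ℝ)) (-((-p) • Real.log)) := h1.neg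
    apply h2.congr
    intro x _
    simp only [Pi.neg_apply, Pi.smul_apply, smul_eq_mul]
    ring
  have hexp : ConvexOn ℝ ((fun x : ℝ => p * Real.log x) '' (Set.Ioi 0)) Real.exp := by
    rw [himg]; exact convexOn_exp
  have hmono : MonotoneOn Real.exp ((fun x : ℝ => p * Real.log x) '' (Set.Ioi 0)) :=
    Real.exp_monotone.monotoneOn _
  have hcomp := hexp.comp hinner hmono
  apply hcomp.congr
  intro x hx
  simp only [Function.comp_apply]
  rw [Real.rpow_def_of_pos hx, mul_comm]

-- ===== renyi facts =====
section Renyi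
open Finset
variable {ι' κ' : Type*} [Fintype ι'] [Fintype κ']

lemma kron_prob {x : ι' → ℝ} {c : κ' → ℝ} (hx : IsProbVec x) (hc : IsProbVec c) :
    IsProbVec (kron x c) := by
  constructor
  · intro p
    exact mul_nonneg (hx.1 p.1) (hc.1 p.2)
  · rw [show (∑ p : ι' × κ', kron x c p) = ∑ i : ι', ∑ j : κ', x i * c j from
      Fintype.sum_prod_type _]
    rw [← Finset.sum_mul_sum, hx.2, hc.2, one_mul]

lemma renyi_one_eq (z : ι' → ℝ) :
    renyi z 1 = ∑ i, (Real.log 2)⁻¹ * Real.negMulLog (z i) := by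
  rw [renyi, if_pos rfl, ← Finset.sum_neg_distrib]
  apply Finset.sum_congr rfl
  intro i _
  rw [Real.negMulLog, Real.logb]
  ring

lemma guard_rpow_sum_pos {z : ι' → ℝ} (hz : IsProbVec z) (α : ℝ) :
    0 < ∑ i, (if z i = 0 then 0 else z i ^ α) := by
  have : ∃ i, z i ≠ 0 := by
    by_contra hno; push_neg at hno
    have h0 : ∑ i, z i = 0 := Finset.sum_eq_zero (fun i _ => hno i)
    rw [hz.2] at h0; norm_num at h0
  obtain ⟨i₀, hi₀⟩ := this
  apply Finset.sum_pos'
  · intro i _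
    by_cases h : z i = 0
    · simp [h]
    · rw [if_neg h]
      exact (Real.rpow_pos_of_pos (lt_of_le_of_ne (hz.1 i) (Ne.symm h)) α).le
  · refine ⟨i₀, Finset.mem_univ _, ?_⟩
    rw [if_neg hi₀]
    exact Real.rpow_pos_of_pos (lt_of_le_of_ne (hz.1 i₀) (Ne.symm hi₀)) α

lemma renyi_zero_eq {z : ι' → ℝ} (hz : IsProbVec z) :
    renyi z 0 = Real.logb 2 (dsupp z) := by
  classical
  rw [renyi, if_neg one_ne_zero.symm]
  have h1 : ∑ i, (if z i = 0 then 0 else z i ^ (0:ℝ)) = (dsupp z : ℝ) := by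
    rw [dsupp_eq_filter]
    rw [Finset.card_filter]
    push_cast
    apply Finset.sum_congr rfl
    intro i _
    by_cases h : z i = 0
    · simp [h]
    · simp [h, Real.rpow_zero]
  rw [h1]
  norm_num

lemma renyi_ne_one {z : ι' → ℝ} {α : ℝ} (hα : α ≠ 1) :
    renyi z α = (if 0 ≤ α then (1:ℝ) else -1) / (1 - α) *
      Real.logb 2 (∑ i, if z i = 0 then 0 else z i ^ α) := by
  rw [renyi, if_neg hα]

lemma renyi_kron {x : ι' → ℝ} {c : κ' → ℝ} (hx : IsProbVec x) (hc : IsProbVec c) (α : ℝ) :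
    renyi (kron x c) α = renyi x α + renyi c α := by
  classical
  by_cases hα : α = 1
  · subst hα
    rw [renyi_one_eq, renyi_one_eq, renyi_one_eq]
    rw [show (∑ p : ι' × κ', (Real.log 2)⁻¹ * Real.negMulLog (kron x c p)) =
        ∑ i : ι', ∑ j : κ', (Real.log 2)⁻¹ * Real.negMulLog (x i * c j) from
      Fintype.sum_prod_type _]
    have key : ∀ i j, (Real.log 2)⁻¹ * Real.negMulLog (x i * c j) =
        c j * ((Real.log 2)⁻¹ * Real.negMulLog (x i)) +
        x i * ((Real.log 2)⁻¹ * Real.negMulLog (c j)) := by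
      intro i j
      rw [Real.negMulLog_mul]
      ring
    calc ∑ i : ι', ∑ j : κ', (Real.log 2)⁻¹ * Real.negMulLog (x i * c j)
        = ∑ i : ι', ∑ j : κ', (c j * ((Real.log 2)⁻¹ * Real.negMulLog (x i)) +
            x i * ((Real.log 2)⁻¹ * Real.negMulLog (c j))) := by
          exact Finset.sum_congr rfl (fun i _ => Finset.sum_congr rfl (fun j _ => key i j))
      _ = (∑ j : κ', c j) * (∑ i : ι', (Real.log 2)⁻¹ * Real.negMulLog (x i)) +
          (∑ i : ι', x i) * (∑ j : κ', (Real.log 2)⁻¹ * Real.negMulLog (c j)) := by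
          have hrow : ∀ i : ι', ∑ j : κ', (c j * ((Real.log 2)⁻¹ * Real.negMulLog (x i)) +
              x i * ((Real.log 2)⁻¹ * Real.negMulLog (c j))) =
              (∑ j : κ', c j) * ((Real.log 2)⁻¹ * Real.negMulLog (x i)) +
              x i * ∑ j : κ', (Real.log 2)⁻¹ * Real.negMulLog (c j) := by
            intro i
            rw [Finset.sum_add_distrib, ← Finset.sum_mul, ← Finset.mul_sum]
          rw [Finset.sum_congr rfl (fun i _ => hrow i), Finset.sum_add_distrib,
            ← Finset.mul_sum, ← Finset.sum_mul]
      _ = _ := by rw [hx.2, hc.2, one_mul, one_mul]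
  · rw [renyi_ne_one hα, renyi_ne_one hα, renyi_ne_one hα]
    have hprod : (∑ p : ι' × κ', if kron x c p = 0 then 0 else kron x c p ^ α) =
        (∑ i, if x i = 0 then 0 else x i ^ α) * (∑ j, if c j = 0 then 0 else c j ^ α) := by
      rw [show (∑ p : ι' × κ', if kron x c p = 0 then 0 else kron x c p ^ α) =
          ∑ i : ι', ∑ j : κ', (if x i * c j = 0 then 0 else (x i * c j) ^ α) from
        Fintype.sum_prod_type _]
      rw [Finset.sum_mul_sum]
      apply Finset.sum_congr rfl
      intro i _
      apply Finset.sum_congr rfl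
      intro j _
      by_cases hxi : x i = 0
      · simp [hxi]
      · by_cases hcj : c j = 0
        · simp [hcj]
        · rw [if_neg (mul_ne_zero hxi hcj), if_neg hxi, if_neg hcj,
            Real.mul_rpow (hx.1 i) (hc.1 j)]
    rw [hprod]
    rw [Real.logb_mul (ne_of_gt (guard_rpow_sum_pos hx α)) (ne_of_gt (guard_rpow_sum_pos hc α))]
    ring

end Renyi
-- ===== per-α comparisons =====
section Compare
open Finset
variable {ι' : Type*} [Fintype ι']

lemma renyi_le_of_maj {X Y : ι' → ℝ} (hX : IsProbVec X) (hY : IsProbVec Y)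
    (hm : Maj X Y) {α : ℝ} (hα : 0 ≤ α) : renyi Y α ≤ renyi X α := by
  rcases eq_or_lt_of_le hα with rfl | hpos
  · -- α = 0
    rw [renyi_zero_eq hX, renyi_zero_eq hY]
    exact Real.logb_le_logb_of_le one_lt_two
      (by exact_mod_cast dsupp_pos hY) (by exact_mod_cast dsupp_le_of_maj hX hY hm)
  rcases lt_trichotomy α 1 with h1 | h1 | h1
  · -- 0 < α < 1
    have hne1 : α ≠ 1 := ne_of_lt h1
    rw [renyi_ne_one hne1, renyi_ne_one hne1, if_pos hα]
    have hg : ∀ z : ι' → ℝ, (∑ i, if z i = 0 then 0 else z i ^ α) = ∑ i, z i ^ α := by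
      intro z
      apply Finset.sum_congr rfl
      intro i _
      by_cases h : z i = 0
      · rw [if_pos h, h, Real.zero_rpow (ne_of_gt hpos)]
      · rw [if_neg h]
    have hf : ConcaveOn ℝ (Set.Ici 0) fun t : ℝ => t ^ α :=
      (Real.strictConcaveOn_rpow hpos h1).concaveOn
    have hsum : ∑ i, Y i ^ α ≤ ∑ i, X i ^ α := sum_concave_le hX hY hm hf
    have hposY : 0 < ∑ i, Y i ^ α := by rw [← hg]; exact guard_rpow_sum_pos hY α
    rw [hg, hg]
    apply mul_le_mul_of_nonneg_left
    · exact Real.logb_le_logb_of_le one_lt_two hposY hsum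
    · apply div_nonneg one_pos.le; linarith
  · -- α = 1
    subst h1
    rw [renyi_one_eq, renyi_one_eq]
    have hconc : ConcaveOn ℝ (Set.Ici (0:ℝ)) fun t : ℝ => (Real.log 2)⁻¹ * Real.negMulLog t := by
      have := Real.concaveOn_negMulLog.smul
        (c := (Real.log 2)⁻¹) (inv_nonneg.mpr (Real.log_pos one_lt_two).le)
      apply this.congr
      intro t _
      simp
    exact sum_concave_le hX hY hm hconc
  · -- α > 1
    have hne1 : α ≠ 1 := ne_of_gt h1
    rw [renyi_ne_one hne1, renyi_ne_one hne1, if_pos hα]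
    have hg : ∀ z : ι' → ℝ, (∑ i, if z i = 0 then 0 else z i ^ α) = ∑ i, z i ^ α := by
      intro z
      apply Finset.sum_congr rfl
      intro i _
      by_cases h : z i = 0
      · rw [if_pos h, h, Real.zero_rpow (ne_of_gt hpos)]
      · rw [if_neg h]
    have hf : ConcaveOn ℝ (Set.Ici 0) fun t : ℝ => -(t ^ α) := by
      have := (convexOn_rpow h1.le).neg
      apply this.congr
      intro t _
      simp
    have hsum' : ∑ i, -(Y i ^ α) ≤ ∑ i, -(X i ^ α) := sum_concave_le hX hY hm hf
    have hsum : ∑ i, X i ^ α ≤ ∑ i, Y i ^ α := by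
      rw [Finset.sum_neg_distrib, Finset.sum_neg_distrib] at hsum'
      linarith
    have hposX : 0 < ∑ i, X i ^ α := by rw [← hg]; exact guard_rpow_sum_pos hX α
    rw [hg, hg]
    apply mul_le_mul_of_nonpos_left
    · exact Real.logb_le_logb_of_le one_lt_two hposX hsum
    · apply div_nonpos_of_nonneg_of_nonpos one_pos.le; linarith

lemma renyi_le_of_maj_neg {X Y : ι' → ℝ} (hX : IsProbVec X) (hY : IsProbVec Y)
    (hm : Maj X Y) (hd : dsupp X = dsupp Y) {α : ℝ} (hα : α < 0) :
    renyi Y α ≤ renyi X α := by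
  have hne1 : α ≠ 1 := by linarith
  rw [renyi_ne_one hne1, renyi_ne_one hne1, if_neg (not_le.mpr hα)]
  have hf : ConcaveOn ℝ (Set.Ioi 0) fun t : ℝ => -(t ^ α) := by
    have := (convexOn_rpow_neg hα).neg
    apply this.congr
    intro t _
    simp
  have key := guard_sum_le hX hY hm hd hf (fun t => -(t ^ α)) (fun t _ => rfl)
  have hneg : ∀ z : ι' → ℝ, (∑ i, if z i = 0 then 0 else -(z i ^ α)) =
      -∑ i, (if z i = 0 then 0 else z i ^ α) := by
    intro z
    rw [← Finset.sum_neg_distrib]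
    apply Finset.sum_congr rfl
    intro i _
    split <;> simp
  rw [hneg, hneg] at key
  have hsum : (∑ i, if X i = 0 then 0 else X i ^ α) ≤ ∑ i, (if Y i = 0 then 0 else Y i ^ α) := by
    linarith
  apply mul_le_mul_of_nonpos_left
  · exact Real.logb_le_logb_of_le one_lt_two (guard_rpow_sum_pos hX α) hsum
  · apply div_nonpos_of_nonpos_of_nonneg (by norm_num); linarith

end Compare
/-- `T(y) ⊆ R(y)`: if `x ⊗ c ≺ y ⊗ c` for some probability vector `c`, then
the Renyi entropy of `x` is not less than that of `y`. -/
theorem stmt18 {n : ℕ} (x y : Fin n → ℝ) (hx : IsProbVec x) (hy : IsProbVec y)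
    (h : ∃ (m : ℕ) (c : Fin m → ℝ), IsProbVec c ∧ Maj (kron x c) (kron y c)) :
    RenyiGE x y := by
  obtain ⟨m, c, hc, hmaj⟩ := h
  have hX : IsProbVec (kron x c) := kron_prob hx hc
  have hY : IsProbVec (kron y c) := kron_prob hy hc
  have hdXY : dsupp (kron y c) ≤ dsupp (kron x c) := dsupp_le_of_maj hX hY hmaj
  have hkx : dsupp (kron x c) = dsupp x * dsupp c := dsupp_kron x c
  have hky : dsupp (kron y c) = dsupp y * dsupp c := dsupp_kron y c
  have hcpos : 0 < dsupp c := dsupp_pos hc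
  have hxy : dsupp y ≤ dsupp x := by
    rw [hkx, hky] at hdXY
    exact Nat.le_of_mul_le_mul_right hdXY hcpos
  have hge : ∀ α : ℝ, 0 ≤ α → renyi y α ≤ renyi x α := by
    intro α hα
    have hcmp := renyi_le_of_maj hX hY hmaj hα
    rw [renyi_kron hx hc, renyi_kron hy hc] at hcmp
    linarith
  rcases lt_or_eq_of_le hxy with hlt | heq
  · exact Or.inl ⟨hlt, hge⟩
  · refine Or.inr ⟨heq.symm, ?_⟩
    intro α
    rcases le_or_gt 0 α with hα | hα
    · exact hge α hα
    · have hdk : dsupp (kron x c) = dsupp (kron y c) := by rw [hkx, hky, ← heq]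
      have hcmp := renyi_le_of_maj_neg hX hY hmaj hdk hα
      rw [renyi_kron hx hc, renyi_kron hy hc] at hcmp
      linarith
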